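/- For every p ∈ (0,1) there is a constant C(p) ∈ (0,∞) such that for all integers k ≥ 1, all s₀ ∈ (0,∞) and all T ∈ (0,∞): ∫_{(0,T)^k} ∏_{j=1}^k 1/(2 s_j + s_{j-1}) d(s₁,…,s_k) ≤ C(p)^k (T/s₀)^p. -/

import Mathlib

open MeasureTheory

open Set
open scoped ENNReal

noncomputable def F (k : ℕ) (s₀ : ℝ) (s : Fin k → ℝ) : ℝ :=
  ∏ j : Fin k, 1 / (2 * s j +
    (if (j : ℕ) = 0 then s₀
     else s ⟨(j : ℕ) - 1, Nat.lt_of_le_of_lt (Nat.sub_le _ _) j.isLt⟩))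

lemma F_measurable (k : ℕ) (s₀ : ℝ) : Measurable (F k s₀) := by
  unfold F
  apply Finset.measurable_prod
  intro j _
  apply Measurable.div measurable_const
  apply Measurable.add ((measurable_pi_apply j).const_mul 2)
  split_ifs
  · exact measurable_const
  · exact measurable_pi_apply _

noncomputable def L (T : ℝ) (k : ℕ) (s₀ : ℝ) : ℝ≥0∞ :=
  ∫⁻ s, ENNReal.ofReal (F k s₀ s)
    ∂(Measure.pi fun _ : Fin k => (volume : Measure ℝ).restrict (Set.Ioo 0 T))

lemma L_zero (T s₀ : ℝ) : L T 0 s₀ = 1 := by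
  have hF : F 0 s₀ = fun _ => 1 := funext fun s => by simp [F]
  rw [L, hF, Measure.pi_of_empty]
  simp

lemma pi_restrict (k : ℕ) (T : ℝ) :
    (Measure.pi fun _ : Fin k => (volume : Measure ℝ)).restrict
        (Set.univ.pi fun _ => Set.Ioo (0:ℝ) T)
      = Measure.pi fun _ : Fin k => (volume : Measure ℝ).restrict (Set.Ioo 0 T) := by
  refine (Measure.pi_eq fun s hs => ?_).symm
  rw [Measure.restrict_apply (MeasurableSet.univ_pi hs), ← Set.pi_inter_distrib,
    Measure.pi_pi]
  exact Finset.prod_congr rfl fun i _ => (Measure.restrict_apply (hs i)).symm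

lemma F_cons (k : ℕ) (s₀ x : ℝ) (t : Fin k → ℝ) :
    F (k+1) s₀ (Fin.cons x t) = (1 / (2 * x + s₀)) * F k x t := by
  unfold F
  rw [Fin.prod_univ_succ]
  congr 1
  apply Finset.prod_congr rfl
  intro i _
  congr 1
  rw [Fin.cons_succ]
  congr 1
  rcases i with ⟨iv, hiv⟩
  cases iv with
  | zero => simp
  | succ m =>
    rw [if_neg (by simp), if_neg (by simp)]
    exact @Fin.cons_succ k (fun _ => ℝ) x t ⟨m, Nat.lt_of_succ_lt hiv⟩

lemma cons_measurable (k : ℕ) :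
    Measurable fun y : ℝ × (Fin k → ℝ) => (Fin.cons y.1 y.2 : Fin (k+1) → ℝ) := by
  rw [measurable_pi_iff]
  intro j
  refine Fin.cases ?_ ?_ j
  · exact measurable_fst
  · intro i
    exact (measurable_pi_apply i).comp measurable_snd

lemma L_succ (T : ℝ) {s₀ : ℝ} (hs₀ : 0 ≤ s₀) (k : ℕ) :
    L T (k+1) s₀
      = ∫⁻ x in Set.Ioo 0 T, ENNReal.ofReal (1 / (2*x+s₀)) * L T k x := by
  have hmp := (measurePreserving_piFinSuccAbove
    (fun _ : Fin (k+1) => (volume : Measure ℝ).restrict (Set.Ioo 0 T)) 0).symm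
  have hfm : Measurable fun s : Fin (k+1) → ℝ => ENNReal.ofReal (F (k+1) s₀ s) :=
    ENNReal.measurable_ofReal.comp (F_measurable _ _)
  rw [L, ← hmp.lintegral_comp hfm]
  have hsymm : ∀ y : ℝ × (Fin k → ℝ),
      (MeasurableEquiv.piFinSuccAbove (fun _ : Fin (k+1) => ℝ) 0).symm y
        = Fin.cons y.1 y.2 := by
    intro y
    simp [MeasurableEquiv.piFinSuccAbove, Fin.insertNthEquiv]
  have hfm2 : Measurable fun y : ℝ × (Fin k → ℝ) =>
      ENNReal.ofReal (F (k+1) s₀ (Fin.cons y.1 y.2)) :=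
    (ENNReal.measurable_ofReal.comp (F_measurable _ _)).comp (cons_measurable k)
  calc ∫⁻ y, ENNReal.ofReal
          (F (k+1) s₀ ((MeasurableEquiv.piFinSuccAbove (fun _ : Fin (k+1) => ℝ) 0).symm y))
        ∂(((volume : Measure ℝ).restrict (Set.Ioo 0 T)).prod
            (Measure.pi fun _ : Fin k => (volume : Measure ℝ).restrict (Set.Ioo 0 T)))
      = ∫⁻ y, ENNReal.ofReal (F (k+1) s₀ (Fin.cons y.1 y.2))
        ∂(((volume : Measure ℝ).restrict (Set.Ioo 0 T)).prod
            (Measure.pi fun _ : Fin k => (volume : Measure ℝ).restrict (Set.Ioo 0 T))) := by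
        exact lintegral_congr fun y => by rw [hsymm]
    _ = ∫⁻ x in Set.Ioo 0 T, ∫⁻ t, ENNReal.ofReal (F (k+1) s₀ (Fin.cons x t))
          ∂(Measure.pi fun _ : Fin k => (volume : Measure ℝ).restrict (Set.Ioo 0 T)) :=
        lintegral_prod _ hfm2.aemeasurable
    _ = ∫⁻ x in Set.Ioo 0 T, ENNReal.ofReal (1 / (2*x+s₀)) * L T k x := by
        refine setLIntegral_congr_fun measurableSet_Ioo
          (fun x hx => ?_)
        have hx0 : (0:ℝ) ≤ 1 / (2*x+s₀) :=
          div_nonneg zero_le_one (by linarith [hx.1])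
        rw [L, ← lintegral_const_mul' _ _ ENNReal.ofReal_ne_top]
        exact lintegral_congr fun t => by
          rw [F_cons, ENNReal.ofReal_mul hx0]

lemma key_int {p : ℝ} (hp0 : 0 < p) (hp1 : p < 1) {T a : ℝ} (hT : 0 < T) (ha : 0 < a) :
    ∫⁻ x in Set.Ioo 0 T, ENNReal.ofReal ((T/x)^p / (2*x+a))
      ≤ ENNReal.ofReal ((1/(1-p) + 1/p) * (T/a)^p) := by
  have h1p : 0 < 1 - p := by linarith
  have step1 : ∫⁻ x in Set.Ioo 0 T, ENNReal.ofReal ((T/x)^p / (2*x+a))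
      = ∫⁻ x in Set.Ioo 0 T,
          ENNReal.ofReal (T^p) * ENNReal.ofReal (x^(-p) / (2*x+a)) := by
    refine setLIntegral_congr_fun measurableSet_Ioo
      (fun x hx => ?_)
    rw [← ENNReal.ofReal_mul (Real.rpow_nonneg hT.le _)]
    congr 1
    rw [Real.div_rpow hT.le hx.1.le, Real.rpow_neg hx.1.le]
    field_simp
  rw [step1, lintegral_const_mul' _ _ ENNReal.ofReal_ne_top]
  have hIoc : ∫⁻ x in Set.Ioc 0 a, ENNReal.ofReal (x^(-p) / (2*x+a))
      ≤ ENNReal.ofReal (a^(-p) / (1-p)) := by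
    have hmono : ∫⁻ x in Set.Ioc 0 a, ENNReal.ofReal (x^(-p) / (2*x+a))
        ≤ ∫⁻ x in Set.Ioc 0 a, ENNReal.ofReal (a⁻¹ * x^(-p)) := by
      refine setLIntegral_mono' measurableSet_Ioc fun x hx => ?_
      refine ENNReal.ofReal_le_ofReal ?_
      rw [div_eq_mul_inv, mul_comm]
      refine mul_le_mul_of_nonneg_right ?_ (Real.rpow_nonneg hx.1.le _)
      exact inv_anti₀ ha (by linarith [hx.1])
    refine hmono.trans (le_of_eq ?_)
    have hint : IntegrableOn (fun x : ℝ => x^(-p)) (Set.Ioc 0 a) := by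
      rw [← intervalIntegrable_iff_integrableOn_Ioc_of_le ha.le]
      exact intervalIntegral.intervalIntegrable_rpow' (by linarith)
    have heval : ∫ x in Set.Ioc 0 a, x^(-p) = a^(1-p) / (1-p) := by
      rw [← intervalIntegral.integral_of_le ha.le,
        integral_rpow (Or.inl (by linarith))]
      rw [Real.zero_rpow (by linarith : -p + 1 ≠ 0)]
      norm_num
      rw [neg_add_eq_sub]
    calc ∫⁻ x in Set.Ioc 0 a, ENNReal.ofReal (a⁻¹ * x^(-p))
        = ENNReal.ofReal a⁻¹ * ∫⁻ x in Set.Ioc 0 a, ENNReal.ofReal (x^(-p)) := by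
          rw [← lintegral_const_mul' _ _ ENNReal.ofReal_ne_top]
          refine setLIntegral_congr_fun measurableSet_Ioc
            (fun x hx => ?_)
          rw [← ENNReal.ofReal_mul (by positivity)]
      _ = ENNReal.ofReal a⁻¹ * ENNReal.ofReal (a^(1-p) / (1-p)) := by
          rw [← ofReal_integral_eq_lintegral_ofReal hint
            ((ae_restrict_iff' measurableSet_Ioc).2 (Filter.Eventually.of_forall
              fun x hx => Real.rpow_nonneg hx.1.le _)), heval]
      _ = ENNReal.ofReal (a^(-p) / (1-p)) := by
          rw [← ENNReal.ofReal_mul (by positivity)]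
          congr 1
          rw [← mul_div_assoc]
          congr 1
          rw [← Real.rpow_neg_one a, ← Real.rpow_add ha]
          congr 1
          ring
  have hIoi : ∫⁻ x in Set.Ioi a, ENNReal.ofReal (x^(-p) / (2*x+a))
      ≤ ENNReal.ofReal (a^(-p) / p) := by
    have hmono : ∫⁻ x in Set.Ioi a, ENNReal.ofReal (x^(-p) / (2*x+a))
        ≤ ∫⁻ x in Set.Ioi a, ENNReal.ofReal (x^(-p-1)) := by
      refine setLIntegral_mono' measurableSet_Ioi fun x hx => ?_
      have hx0 : 0 < x := ha.trans hx
      refine ENNReal.ofReal_le_ofReal ?_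
      have : x^(-p-1) = x^(-p) * x⁻¹ := by
        rw [← Real.rpow_neg_one x, ← Real.rpow_add hx0]
        congr 1
      rw [this, div_eq_mul_inv]
      refine mul_le_mul_of_nonneg_left ?_ (Real.rpow_nonneg hx0.le _)
      exact inv_anti₀ hx0 (by linarith)
    refine hmono.trans ?_
    have hint : IntegrableOn (fun x : ℝ => x^(-p-1)) (Set.Ioi a) :=
      integrableOn_Ioi_rpow_of_lt (by linarith) ha
    have heval : ∫ x in Set.Ioi a, x^(-p-1) = a^(-p) / p := by
      rw [integral_Ioi_rpow_of_lt (by linarith) ha]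
      rw [show -p-1+1 = -p by ring]
      rw [neg_div, div_neg, neg_neg]
    rw [← ofReal_integral_eq_lintegral_ofReal hint
      ((ae_restrict_iff' measurableSet_Ioi).2 (Filter.Eventually.of_forall
        fun x hx => Real.rpow_nonneg (ha.trans hx).le _)), heval]
  have hsplit : ∫⁻ x in Set.Ioo 0 T, ENNReal.ofReal (x^(-p) / (2*x+a))
      ≤ ENNReal.ofReal (a^(-p)/(1-p)) + ENNReal.ofReal (a^(-p)/p) := by
    calc ∫⁻ x in Set.Ioo 0 T, ENNReal.ofReal (x^(-p) / (2*x+a))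
        ≤ ∫⁻ x in Set.Ioc 0 a ∪ Set.Ioi a, ENNReal.ofReal (x^(-p) / (2*x+a)) := by
          refine lintegral_mono_set ?_
          rw [Set.Ioc_union_Ioi_eq_Ioi ha.le]
          exact fun x hx => hx.1
      _ ≤ (∫⁻ x in Set.Ioc 0 a, ENNReal.ofReal (x^(-p) / (2*x+a)))
            + ∫⁻ x in Set.Ioi a, ENNReal.ofReal (x^(-p) / (2*x+a)) :=
          lintegral_union_le _ _ _
      _ ≤ _ := add_le_add hIoc hIoi
  calc ENNReal.ofReal (T^p) * ∫⁻ x in Set.Ioo 0 T, ENNReal.ofReal (x^(-p) / (2*x+a))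
      ≤ ENNReal.ofReal (T^p) * (ENNReal.ofReal (a^(-p)/(1-p)) + ENNReal.ofReal (a^(-p)/p)) :=
        mul_le_mul_right hsplit _
    _ = ENNReal.ofReal ((1/(1-p) + 1/p) * (T/a)^p) := by
        rw [← ENNReal.ofReal_add (by positivity) (by positivity),
          ← ENNReal.ofReal_mul (by positivity)]
        congr 1
        rw [Real.div_rpow hT.le ha.le, Real.rpow_neg ha.le]
        field_simp

lemma step_lemma {p : ℝ} (hp0 : 0 < p) (hp1 : p < 1) {T : ℝ} (hT : 0 < T) (k : ℕ)
    (hS : ∀ x : ℝ, 0 < x → x < T →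
      L T k x ≤ ENNReal.ofReal ((1/(1-p)+1/p)^k * (T/x)^p)) :
    ∀ s₀ : ℝ, 0 < s₀ →
      L T (k+1) s₀ ≤ ENNReal.ofReal ((1/(1-p)+1/p)^(k+1) * (T/s₀)^p) := by
  intro s₀ hs₀
  have h1p : 0 < 1 - p := by linarith
  set C : ℝ := 1/(1-p) + 1/p with hCdef
  have hC : 0 < C := add_pos (by positivity) (by positivity)
  rw [L_succ T hs₀.le k]
  calc ∫⁻ x in Set.Ioo 0 T, ENNReal.ofReal (1 / (2*x+s₀)) * L T k x
      ≤ ∫⁻ x in Set.Ioo 0 T,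
          ENNReal.ofReal (C^k) * ENNReal.ofReal ((T/x)^p / (2*x+s₀)) := by
        refine setLIntegral_mono' measurableSet_Ioo fun x hx => ?_
        have h2 : (0:ℝ) < 2*x+s₀ := by linarith [hx.1]
        calc ENNReal.ofReal (1 / (2*x+s₀)) * L T k x
            ≤ ENNReal.ofReal (1 / (2*x+s₀)) * ENNReal.ofReal (C^k * (T/x)^p) :=
              mul_le_mul_right (hS x hx.1 hx.2) _
          _ = ENNReal.ofReal (C^k) * ENNReal.ofReal ((T/x)^p / (2*x+s₀)) := by
              rw [← ENNReal.ofReal_mul (div_nonneg zero_le_one h2.le),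
                ← ENNReal.ofReal_mul (pow_pos hC k).le]
              congr 1
              field_simp
    _ = ENNReal.ofReal (C^k)
          * ∫⁻ x in Set.Ioo 0 T, ENNReal.ofReal ((T/x)^p / (2*x+s₀)) :=
        lintegral_const_mul' _ _ ENNReal.ofReal_ne_top
    _ ≤ ENNReal.ofReal (C^k) * ENNReal.ofReal (C * (T/s₀)^p) :=
        mul_le_mul_right (key_int hp0 hp1 hT hs₀) _
    _ = ENNReal.ofReal (C^(k+1) * (T/s₀)^p) := by
        rw [← ENNReal.ofReal_mul (pow_pos hC k).le]
        congr 1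
        ring

lemma Sk_lemma {p : ℝ} (hp0 : 0 < p) (hp1 : p < 1) {T : ℝ} (hT : 0 < T) :
    ∀ k : ℕ, ∀ x : ℝ, 0 < x → x < T →
      L T k x ≤ ENNReal.ofReal ((1/(1-p)+1/p)^k * (T/x)^p) := by
  intro k
  induction k with
  | zero =>
    intro x hx hxT
    rw [L_zero, pow_zero, one_mul]
    have h1 : (1:ℝ) ≤ (T/x)^p := by
      calc (1:ℝ) = 1^p := (Real.one_rpow p).symm
        _ ≤ (T/x)^p := Real.rpow_le_rpow zero_le_one
            ((one_le_div hx).2 hxT.le) hp0.le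
    calc (1:ℝ≥0∞) = ENNReal.ofReal 1 := ENNReal.ofReal_one.symm
      _ ≤ _ := ENNReal.ofReal_le_ofReal h1
  | succ k ih => exact fun x hx _ => step_lemma hp0 hp1 hT k ih x hx

/-- For every `p ∈ (0,1)` there is `C(p) ∈ (0,∞)` such that for all integers `k ≥ 1`,
`s₀ ∈ (0,∞)` and `T ∈ (0,∞)`,
`∫_{(0,T)^k} ∏_{j=1}^k 1/(2 s_j + s_{j-1}) d(s₁,…,s_k) ≤ C(p)^k (T/s₀)^p`. -/
theorem stmt_1 :
    ∀ p : ℝ, p ∈ Set.Ioo (0:ℝ) 1 → ∃ C : ℝ, 0 < C ∧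
      ∀ k : ℕ, 1 ≤ k → ∀ s₀ T : ℝ, 0 < s₀ → 0 < T →
        (∫ s in Set.univ.pi (fun _ : Fin k => Set.Ioo (0:ℝ) T),
            ∏ j : Fin k, 1 / (2 * s j +
              (if (j : ℕ) = 0 then s₀
               else s ⟨(j : ℕ) - 1, Nat.lt_of_le_of_lt (Nat.sub_le _ _) j.isLt⟩)))
          ≤ C ^ k * (T / s₀) ^ p := by
  intro p hp
  obtain ⟨hp0, hp1⟩ := hp
  have h1p : 0 < 1 - p := by linarith
  refine ⟨1/(1-p) + 1/p, add_pos (by positivity) (by positivity), ?_⟩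
  intro k hk s₀ T hs₀ hT
  obtain ⟨m, rfl⟩ : ∃ m, k = m + 1 := ⟨k - 1, by omega⟩
  set C : ℝ := 1/(1-p) + 1/p with hCdef
  have hC : 0 < C := add_pos (by positivity) (by positivity)
  have hb : L T (m+1) s₀ ≤ ENNReal.ofReal (C^(m+1) * (T/s₀)^p) :=
    step_lemma hp0 hp1 hT m (Sk_lemma hp0 hp1 hT m) s₀ hs₀
  have hmeasS : MeasurableSet (Set.univ.pi fun _ : Fin (m+1) => Set.Ioo (0:ℝ) T) :=
    MeasurableSet.univ_pi fun _ => measurableSet_Ioo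
  have hnn : 0 ≤ᵐ[volume.restrict (Set.univ.pi fun _ : Fin (m+1) => Set.Ioo (0:ℝ) T)]
      F (m+1) s₀ := by
    refine (ae_restrict_mem hmeasS).mono fun s hs => ?_
    refine Finset.prod_nonneg fun j _ => ?_
    have h1 : 0 < s j := (hs j (Set.mem_univ _)).1
    have h2 : 0 < (if (j : ℕ) = 0 then s₀
        else s ⟨(j : ℕ) - 1, Nat.lt_of_le_of_lt (Nat.sub_le _ _) j.isLt⟩) := by
      split_ifs
      · exact hs₀
      · exact (hs _ (Set.mem_univ _)).1
    exact div_nonneg zero_le_one (by linarith)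
  have heq := integral_eq_lintegral_of_nonneg_ae hnn
    ((F_measurable (m+1) s₀).aestronglyMeasurable)
  have hLeq : (∫⁻ s, ENNReal.ofReal (F (m+1) s₀ s)
      ∂(volume.restrict (Set.univ.pi fun _ : Fin (m+1) => Set.Ioo (0:ℝ) T)))
      = L T (m+1) s₀ := by
    rw [L]
    congr 1
    rw [MeasureTheory.volume_pi, pi_restrict]
  have hfinal : (∫ s in Set.univ.pi (fun _ : Fin (m+1) => Set.Ioo (0:ℝ) T),
      F (m+1) s₀ s) ≤ C^(m+1) * (T/s₀)^p := by
    rw [heq, hLeq]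
    exact ENNReal.toReal_le_of_le_ofReal
      (mul_nonneg (pow_pos hC (m+1)).le (Real.rpow_nonneg (by positivity) p)) hb
  exact hfinal
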